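/- Let S be a finite set and R = {X_1, ..., X_ℓ} a collection of subsets of S with X_1 ⊊ X_2 ⊊ ... ⊊ X_ℓ. Define φ(S, R) as the number of permutations of S that do not have any set in R as a prefix (a set X is a prefix of a permutation if the first |X| elements of the permutation are exactly the elements of X). Then φ(S, R) = |S|! − Σ_{i=1}^{ℓ} |S \ X_i|! · φ(X_i, {X_1, ..., X_{i−1}}). -/

import Mathlib

/-- `phi S R` is the number of permutations (nodup lists enumerating `S`) of the
finite set `S` that do not have any set `X ∈ R` as a prefix, where a set `X` is a
prefix of a list if the first `|X|` elements of the list are exactly the elements of `X`. -/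
noncomputable def phi {α : Type*} [DecidableEq α] (S : Finset α) (R : Set (Finset α)) : ℕ :=
  Nat.card {l : List α // l.Nodup ∧ l.toFinset = S ∧ ∀ X ∈ R, (l.take X.card).toFinset ≠ X}

section Aux

open List Finset

variable {α : Type*} [DecidableEq α]

/-- The finset of all permutations (as lists) of a finset. -/
noncomputable def permsF (S : Finset α) : Finset (List α) := S.toList.permutations.toFinset

lemma mem_permsF {S : Finset α} {l : List α} :
    l ∈ permsF S ↔ l.Nodup ∧ l.toFinset = S := by
  simp only [permsF, List.mem_toFinset, mem_permutations]
  constructor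
  · intro h
    refine ⟨h.nodup_iff.mpr S.nodup_toList, ?_⟩
    ext a
    rw [List.mem_toFinset, h.mem_iff, Finset.mem_toList]
  · rintro ⟨hn, hS⟩
    exact List.perm_of_nodup_nodup_toFinset_eq hn S.nodup_toList
      (by rw [hS, Finset.toList_toFinset])

lemma card_permsF (S : Finset α) : (permsF S).card = S.card.factorial := by
  rw [permsF, List.toFinset_card_of_nodup (List.nodup_permutations _ S.nodup_toList),
    List.length_permutations, Finset.length_toList]

lemma phi_eq (S : Finset α) (R : Set (Finset α)) (p : List α → Prop) [DecidablePred p]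
    (hp : ∀ l, p l ↔ ∀ Y ∈ R, (l.take Y.card).toFinset ≠ Y) :
    phi S R = ((permsF S).filter p).card := by
  rw [phi, ← Nat.card_eq_finsetCard]
  refine Nat.card_congr (Equiv.subtypeEquivRight fun l => ?_)
  simp only [Finset.mem_filter, mem_permsF, hp, and_assoc]

lemma cardBmin (S : Finset α) {ℓ : ℕ} (X : Fin ℓ → Finset α)
    (hsub : ∀ i, X i ⊆ S) (hchain : ∀ i j : Fin ℓ, i < j → X i ⊂ X j) (i : Fin ℓ) :
    ((permsF S).filter (fun l => (l.take (X i).card).toFinset = X i ∧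
        ∀ j < i, (l.take (X j).card).toFinset ≠ X j)).card =
      (S \ X i).card.factorial *
        ((permsF (X i)).filter (fun l => ∀ j < i, (l.take (X j).card).toFinset ≠ X j)).card := by
  set k := (X i).card with hk
  rw [← card_permsF, ← Finset.card_product]
  refine Finset.card_bij' (fun l _ => (l.drop k, l.take k)) (fun pq _ => pq.2 ++ pq.1) ?_ ?_ ?_ ?_
  · rintro l hl
    rw [Finset.mem_filter, mem_permsF] at hl
    obtain ⟨⟨hnd, hS⟩, hXi, havoid⟩ := hl
    have h1 := List.take_append_drop k l
    have hnd2 : (l.take k ++ l.drop k).Nodup := by rw [h1]; exact hnd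
    rw [List.nodup_append'] at hnd2
    obtain ⟨hndt, hndd, hdisj⟩ := hnd2
    rw [Finset.mem_product]
    constructor
    · rw [mem_permsF]
      refine ⟨hndd, ?_⟩
      ext a
      simp only [List.mem_toFinset, Finset.mem_sdiff, ← hS, ← hXi]
      constructor
      · intro ha
        exact ⟨by rw [← h1]; exact List.mem_append_right _ ha, fun hm => hdisj hm ha⟩
      · rintro ⟨haS, haX⟩
        rw [← h1, List.mem_append] at haS
        exact haS.resolve_left haX
    · rw [Finset.mem_filter, mem_permsF]
      refine ⟨⟨(List.take_sublist _ _).nodup hnd, hXi⟩, ?_⟩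
      intro j hj
      have hle : (X j).card ≤ k := (Finset.card_lt_card (hchain j i hj)).le
      rw [List.take_take, min_eq_left hle]
      exact havoid j hj
  · rintro ⟨q, p⟩ hpq
    rw [Finset.mem_product, mem_permsF, Finset.mem_filter, mem_permsF] at hpq
    obtain ⟨⟨hndq, hq⟩, ⟨⟨hndp, hp⟩, havoid⟩⟩ := hpq
    have hplen : p.length = k := by rw [← List.toFinset_card_of_nodup hndp, hp]
    have hdisj : p.Disjoint q := by
      intro a hap haq
      have h1 : a ∈ X i := hp ▸ List.mem_toFinset.mpr hap
      have h2 : a ∈ S \ X i := hq ▸ List.mem_toFinset.mpr haq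
      exact (Finset.mem_sdiff.mp h2).2 h1
    rw [Finset.mem_filter, mem_permsF]
    refine ⟨⟨List.nodup_append'.mpr ⟨hndp, hndq, hdisj⟩, ?_⟩, ?_, ?_⟩
    · rw [List.toFinset_append, hp, hq, Finset.union_sdiff_of_subset (hsub i)]
    · rw [← hplen, List.take_left, hp]
    · intro j hj
      have hle : (X j).card ≤ p.length := hplen ▸ (Finset.card_lt_card (hchain j i hj)).le
      rw [List.take_append_of_le_length hle]
      exact havoid j hj
  · rintro l hl
    exact List.take_append_drop k l
  · rintro ⟨q, p⟩ hpq
    rw [Finset.mem_product, mem_permsF, Finset.mem_filter, mem_permsF] at hpq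
    have hplen : p.length = k := by
      rw [← List.toFinset_card_of_nodup hpq.2.1.1, hpq.2.1.2]
    simp only [Prod.mk.injEq]
    rw [← hplen, List.drop_left, List.take_left]
    exact ⟨rfl, rfl⟩

lemma key (S : Finset α) {ℓ : ℕ} (X : Fin ℓ → Finset α)
    (hsub : ∀ i, X i ⊆ S) (hchain : ∀ i j : Fin ℓ, i < j → X i ⊂ X j) :
    S.card.factorial =
      ((permsF S).filter (fun l => ∀ i, (l.take (X i).card).toFinset ≠ X i)).card +
        ∑ i : Fin ℓ, (S \ X i).card.factorial *
          ((permsF (X i)).filter (fun l => ∀ j < i, (l.take (X j).card).toFinset ≠ X j)).card := by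
  have hbad : (permsF S).filter (fun l => ¬ ∀ i, (l.take (X i).card).toFinset ≠ X i)
      = Finset.univ.biUnion (fun i : Fin ℓ => (permsF S).filter
          (fun l => (l.take (X i).card).toFinset = X i ∧
            ∀ j < i, (l.take (X j).card).toFinset ≠ X j)) := by
    ext l
    simp only [Finset.mem_filter, Finset.mem_biUnion, Finset.mem_univ, true_and, not_forall,
      not_not]
    constructor
    · rintro ⟨hl, hex⟩
      have hT : (Finset.univ.filter
          (fun i : Fin ℓ => (l.take (X i).card).toFinset = X i)).Nonempty := by
        obtain ⟨i, hi⟩ := hex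
        exact ⟨i, by simp [hi]⟩
      set i0 := _root_.id ((Finset.univ.filter
          (fun i : Fin ℓ => (l.take (X i).card).toFinset = X i)).min' hT) with hi0
      refine ⟨i0, hl, ?_, ?_⟩
      · have h := Finset.min'_mem _ hT
        rw [Finset.mem_filter] at h
        exact h.2
      · intro j hj hpj
        have hle : i0 ≤ j := Finset.min'_le _ j (by simp [hpj])
        exact absurd hj (not_lt.mpr hle)
    · rintro ⟨i, hl, hi, -⟩
      exact ⟨hl, i, hi⟩
  have hdisj : ∀ i ∈ (Finset.univ : Finset (Fin ℓ)), ∀ j ∈ Finset.univ, i ≠ j →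
      Disjoint ((permsF S).filter (fun l => (l.take (X i).card).toFinset = X i ∧
          ∀ j' < i, (l.take (X j').card).toFinset ≠ X j'))
        ((permsF S).filter (fun l => (l.take (X j).card).toFinset = X j ∧
          ∀ j' < j, (l.take (X j').card).toFinset ≠ X j')) := by
    intro i _ j _ hne
    rw [Finset.disjoint_left]
    intro l hli hlj
    rw [Finset.mem_filter] at hli hlj
    rcases lt_or_gt_of_ne hne with h | h
    · exact hlj.2.2 i h hli.2.1
    · exact hli.2.2 j h hlj.2.1
  rw [← card_permsF S,
    ← Finset.card_filter_add_card_filter_not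
      (p := fun l => ∀ i, (l.take (X i).card).toFinset ≠ X i)]
  congr 1
  rw [hbad, Finset.card_biUnion hdisj]
  exact Finset.sum_congr rfl fun i _ => cardBmin S X hsub hchain i

end Aux

theorem stmt0 {α : Type*} [DecidableEq α] (S : Finset α) (ℓ : ℕ) (X : Fin ℓ → Finset α)
    (hsub : ∀ i, X i ⊆ S) (hchain : ∀ i j : Fin ℓ, i < j → X i ⊂ X j) :
    phi S (Set.range X) =
      Nat.factorial S.card -
        ∑ i : Fin ℓ, Nat.factorial (S \ X i).card * phi (X i) {Y | ∃ j < i, Y = X j} := by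
  have h1 : phi S (Set.range X) =
      ((permsF S).filter (fun l => ∀ i, (l.take (X i).card).toFinset ≠ X i)).card := by
    refine phi_eq _ _ _ fun l => ?_
    constructor
    · rintro h Y ⟨i, rfl⟩
      exact h i
    · intro h i
      exact h (X i) ⟨i, rfl⟩
  have h2 : ∀ i : Fin ℓ, phi (X i) {Y | ∃ j < i, Y = X j} =
      ((permsF (X i)).filter (fun l => ∀ j < i, (l.take (X j).card).toFinset ≠ X j)).card := by
    intro i
    refine phi_eq _ _ _ fun l => ?_
    constructor
    · rintro h Y ⟨j, hj, rfl⟩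
      exact h j hj
    · intro h j hj
      exact h (X j) ⟨j, hj, rfl⟩
  rw [h1]
  have hkey := key S X hsub hchain
  simp only [h2]
  omega
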